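/- For every n ≥ 1 and every m with 1 ≤ m ≤ n, the number R_{n,m} of functions f : Fin n → Fin n with exactly m ascending runs equals the number of pairs (S, x), where S = (S_1, …, S_m) is a family of pairwise disjoint nonempty subsets of Fin n whose union is all of Fin n, ordered so that max(S_1) > max(S_2) > ⋯ > max(S_m), and x = (n_1, …, n_m) is a sequence of elements of Fin n such that for each j, n_j does not lie in the set { min { ℓ ∈ S_i : ℓ > max(S_j) } : 1 ≤ i < j } (note that for i < j each set { ℓ ∈ S_i : ℓ > max(S_j) } is nonempty since max(S_i) > max(S_j)). -/

import Mathlib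

/-- The number of ascending runs of `f`: the number of elements `j` that are the
start of an ascending run, i.e. every preimage `i` of `j` satisfies `j ≤ i`. -/
def numRuns {n : ℕ} (f : Fin n → Fin n) : ℕ :=
  (Finset.univ.filter (fun j : Fin n => ∀ i : Fin n, f i = j → j ≤ i)).card

/-- `R_{n,m}`: the number of functions on `Fin n` with exactly `m` ascending runs. -/
noncomputable def mappingRunCount (n m : ℕ) : ℕ :=
  Nat.card {f : Fin n → Fin n // numRuns f = m}

namespace RunProof
variable {n : ℕ}

/-- preimages of `v` lying strictly below `v`. -/
def preb (f : Fin n → Fin n) (v : Fin n) : Finset (Fin n) :=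
  Finset.univ.filter (fun i => i < v ∧ f i = v)

def isStart (f : Fin n → Fin n) (v : Fin n) : Prop := ∀ i, f i = v → v ≤ i

instance (f : Fin n → Fin n) (v : Fin n) : Decidable (isStart f v) := by
  unfold isStart; infer_instance

lemma isStart_iff {f : Fin n → Fin n} {v : Fin n} : isStart f v ↔ preb f v = ∅ := by
  simp only [isStart, preb, Finset.eq_empty_iff_forall_notMem, Finset.mem_filter,
    Finset.mem_univ, true_and, not_and]
  constructor
  · intro h i hi hf; exact absurd (h i hf) (not_le.2 hi)
  · intro h i hf; by_contra hc; exact h i (by omega) hf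

def gfun (f : Fin n → Fin n) (v : Fin n) : Fin n := (preb f v).max.unbotD v

lemma gfun_of_start {f : Fin n → Fin n} {v : Fin n} (h : isStart f v) : gfun f v = v := by
  rw [gfun, isStart_iff.1 h]; rfl

lemma gfun_mem_preb {f : Fin n → Fin n} {v : Fin n} (h : ¬ isStart f v) :
    gfun f v ∈ preb f v := by
  have hne : (preb f v).Nonempty := Finset.nonempty_iff_ne_empty.2 (fun he => h (isStart_iff.2 he))
  obtain ⟨a, ha⟩ := Finset.max_of_nonempty hne
  rw [gfun, ha]
  exact Finset.mem_of_max ha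

lemma gfun_lt {f : Fin n → Fin n} {v : Fin n} (h : ¬ isStart f v) : gfun f v < v := by
  have := gfun_mem_preb h
  simp only [preb, Finset.mem_filter] at this
  exact this.2.1

lemma apply_gfun {f : Fin n → Fin n} {v : Fin n} (h : ¬ isStart f v) : f (gfun f v) = v := by
  have := gfun_mem_preb h
  simp only [preb, Finset.mem_filter] at this
  exact this.2.2

lemma gfun_le {f : Fin n → Fin n} (v : Fin n) : gfun f v ≤ v := by
  by_cases h : isStart f v
  · rw [gfun_of_start h]
  · exact le_of_lt (gfun_lt h)

lemma le_gfun {f : Fin n → Fin n} {v i : Fin n} (hi : i ∈ preb f v) : i ≤ gfun f v := by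
  have h : ¬ isStart f v := by
    intro hs; rw [isStart_iff.1 hs] at hi; exact absurd hi (Finset.notMem_empty i)
  have hne : (preb f v).Nonempty := ⟨i, hi⟩
  obtain ⟨a, ha⟩ := Finset.max_of_nonempty hne
  have : (i : WithBot (Fin n)) ≤ (preb f v).max := Finset.le_max hi
  rw [ha] at this
  rw [gfun, ha]
  exact_mod_cast this

lemma start_of_gfun_eq {f : Fin n → Fin n} {v : Fin n} (h : gfun f v = v) : isStart f v := by
  by_contra hc; exact absurd h (ne_of_lt (gfun_lt hc))

def rootf (f : Fin n → Fin n) : Fin n → Fin n := (gfun f)^[n]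

lemma iterate_le {g : Fin n → Fin n} (hg : ∀ x, g x ≤ x) (v : Fin n) (k : ℕ) :
    g^[k] v ≤ v := by
  induction k with
  | zero => simp
  | succ k ih => rw [Function.iterate_succ_apply']; exact le_trans (hg _) ih

lemma iterate_fix {g : Fin n → Fin n} (hg : ∀ x, g x ≤ x) (v : Fin n) :
    g (g^[n] v) = g^[n] v := by
  have key : ∀ k : ℕ, g (g^[k] v) = g^[k] v ∨ (g^[k] v : ℕ) + k ≤ (v : ℕ) := by
    intro k
    induction k with
    | zero => right; simp
    | succ k ih =>
      rcases ih with h | h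
      · left; rw [Function.iterate_succ_apply', h, h]
      · by_cases hfix : g (g^[k] v) = g^[k] v
        · left; rw [Function.iterate_succ_apply', hfix, hfix]
        · right
          have hlt : g (g^[k] v) < g^[k] v := lt_of_le_of_ne (hg _) hfix
          rw [Function.iterate_succ_apply']
          have : (g (g^[k] v) : ℕ) < (g^[k] v : ℕ) := hlt
          omega
  rcases key n with h | h
  · exact h
  · have hv : (v : ℕ) < n := v.isLt
    have : (g^[n] v : ℕ) = 0 := by omega
    have h0 : g (g^[n] v) ≤ g^[n] v := hg _
    have : (g (g^[n] v) : ℕ) ≤ 0 := by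
      calc (g (g^[n] v) : ℕ) ≤ (g^[n] v : ℕ) := h0
        _ = 0 := this
    apply Fin.ext; omega

lemma rootf_fix {f : Fin n → Fin n} (v : Fin n) : gfun f (rootf f v) = rootf f v :=
  iterate_fix (fun x => gfun_le x) v

lemma start_rootf {f : Fin n → Fin n} (v : Fin n) : isStart f (rootf f v) :=
  start_of_gfun_eq (rootf_fix v)

lemma rootf_le {f : Fin n → Fin n} (v : Fin n) : rootf f v ≤ v :=
  iterate_le (fun x => gfun_le x) v n

lemma rootf_gfun {f : Fin n → Fin n} (v : Fin n) : rootf f (gfun f v) = rootf f v := by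
  show (gfun f)^[n] (gfun f v) = (gfun f)^[n] v
  rw [← Function.iterate_succ_apply, Function.iterate_succ_apply']
  exact iterate_fix (fun x => gfun_le x) v

lemma rootf_of_start {f : Fin n → Fin n} {v : Fin n} (h : isStart f v) : rootf f v = v := by
  exact Function.iterate_fixed (gfun_of_start h) n

lemma rootf_eq_self_iff {f : Fin n → Fin n} {v : Fin n} : rootf f v = v ↔ isStart f v := by
  constructor
  · intro h; rw [← h]; exact start_rootf v
  · intro h
    by_contra hc
    exact hc (rootf_of_start h)


lemma chain_aux (f : Fin n → Fin n) : ∀ (N : ℕ) (v : Fin n), (v : ℕ) < N → ¬ isStart f v →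
    ∀ w, rootf f w = rootf f v → w < v → w ≤ gfun f v := by
  intro N
  induction N with
  | zero => intro v hv; exact absurd hv (Nat.not_lt_zero _)
  | succ N ih =>
    intro v hvN hv w hw hwv
    by_contra hcon
    push_neg at hcon
    set W := (Finset.univ.filter (fun w' : Fin n =>
      rootf f w' = rootf f v ∧ gfun f v < w' ∧ w' < v)) with hW
    have hWne : W.Nonempty := ⟨w, by simp [hW, hw, hcon, hwv]⟩
    set w0 := W.min' hWne with hw0def
    have hw0 : rootf f w0 = rootf f v ∧ gfun f v < w0 ∧ w0 < v := by
      exact (Finset.mem_filter.1 (Finset.min'_mem W hWne)).2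
    have hroot_le : rootf f v ≤ gfun f v := by
      rw [← rootf_gfun (f := f) v]; exact rootf_le _
    have hw0ns : ¬ isStart f w0 := by
      intro hs
      have : rootf f w0 = w0 := rootf_of_start hs
      rw [hw0.1] at this
      rw [this] at hroot_le
      exact absurd hw0.2.1 (not_lt.2 hroot_le)
    have hvns : ¬ isStart f v := hv
    have h1 : gfun f v ≤ gfun f w0 := by
      apply ih w0 (by have : (w0:ℕ) < (v:ℕ) := hw0.2.2; omega) hw0ns
      · rw [rootf_gfun, hw0.1]
      · exact hw0.2.1
    have hne2 : gfun f v ≠ gfun f w0 := by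
      intro he
      have h3 : f (gfun f v) = v := apply_gfun hvns
      have h4 : f (gfun f w0) = w0 := apply_gfun hw0ns
      rw [he, h4] at h3
      rw [h3] at hw0
      exact absurd hw0.2.2 (lt_irrefl _)
    have hmem : gfun f w0 ∈ W := by
      simp only [hW, Finset.mem_filter, Finset.mem_univ, true_and]
      refine ⟨by rw [rootf_gfun, hw0.1], lt_of_le_of_ne h1 hne2, ?_⟩
      exact lt_trans (gfun_lt hw0ns) hw0.2.2
    have := Finset.min'_le W _ hmem
    rw [← hw0def] at this
    exact absurd (lt_of_le_of_lt this (gfun_lt hw0ns)) (lt_irrefl _)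

lemma chain {f : Fin n → Fin n} {v : Fin n} (hv : ¬ isStart f v) {w : Fin n}
    (hw : rootf f w = rootf f v) (hwv : w < v) : w ≤ gfun f v :=
  chain_aux f ((v : ℕ) + 1) v (Nat.lt_succ_self _) hv w hw hwv

/-- if `v` is the least element above `u` in the same fiber of `rootf`, then `f u = v`. -/
lemma f_eq_next {f : Fin n → Fin n} {u v : Fin n} (hr : rootf f v = rootf f u)
    (huv : u < v) (hmin : ∀ w, rootf f w = rootf f u → u < w → v ≤ w) : f u = v := by
  have hvns : ¬ isStart f v := by
    intro hs
    have h1 : rootf f v = v := rootf_of_start hs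
    have : v ≤ u := by rw [← h1, hr]; exact rootf_le u
    exact absurd huv (not_lt.2 this)
  have h2 : u ≤ gfun f v := chain hvns (by rw [hr]) huv
  have h3 : gfun f v ≤ u := by
    by_contra hc
    push_neg at hc
    have := hmin (gfun f v) (by rw [rootf_gfun, hr]) hc
    exact absurd (lt_of_le_of_lt this (gfun_lt hvns)) (lt_irrefl _)
  have h4 : gfun f v = u := le_antisymm h3 h2
  rw [← h4]
  exact apply_gfun hvns


def topsF (f : Fin n → Fin n) : Finset (Fin n) :=
  Finset.univ.filter (fun v => ∀ w, rootf f w = rootf f v → w ≤ v)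

lemma mem_topsF {f : Fin n → Fin n} {v : Fin n} :
    v ∈ topsF f ↔ ∀ w, rootf f w = rootf f v → w ≤ v := by
  simp [topsF]

lemma top_inj {f : Fin n → Fin n} {v₁ v₂ : Fin n} (h1 : v₁ ∈ topsF f) (h2 : v₂ ∈ topsF f)
    (h : rootf f v₁ = rootf f v₂) : v₁ = v₂ :=
  le_antisymm (mem_topsF.1 h2 v₁ h) (mem_topsF.1 h1 v₂ h.symm)

lemma exists_top (f : Fin n → Fin n) (a : Fin n) :
    ∃ t ∈ topsF f, rootf f t = rootf f a := by
  set B := Finset.univ.filter (fun w => rootf f w = rootf f a) with hB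
  have hne : B.Nonempty := ⟨a, by simp [hB]⟩
  refine ⟨B.max' hne, ?_, ?_⟩
  · rw [mem_topsF]
    intro w hw
    apply Finset.le_max'
    have hm : rootf f (B.max' hne) = rootf f a :=
      (Finset.mem_filter.1 (Finset.max'_mem B hne)).2
    rw [hB, Finset.mem_filter]
    exact ⟨Finset.mem_univ _, by rw [hw, hm]⟩
  · exact (Finset.mem_filter.1 (Finset.max'_mem B hne)).2

lemma card_topsF (f : Fin n → Fin n) : (topsF f).card = numRuns f := by
  have : numRuns f = (Finset.univ.filter (fun v : Fin n => isStart f v)).card := rfl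
  rw [this]
  apply Finset.card_bij (fun v _ => rootf f v)
  · intro a ha
    simp only [Finset.mem_filter, Finset.mem_univ, true_and]
    exact start_rootf a
  · intro a ha b hb hab
    exact top_inj ha hb hab
  · intro b hb
    have hsb : isStart f b := (Finset.mem_filter.1 hb).2
    obtain ⟨t, ht, hrt⟩ := exists_top f b
    exact ⟨t, ht, by rw [hrt, rootf_of_start hsb]⟩

def topIdxF (f : Fin n → Fin n) {m : ℕ} (h : (topsF f).card = m) (j : Fin m) : Fin n :=
  (topsF f).orderEmbOfFin h j.rev

lemma topIdxF_mem {f : Fin n → Fin n} {m : ℕ} (h : (topsF f).card = m) (j : Fin m) :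
    topIdxF f h j ∈ topsF f :=
  Finset.orderEmbOfFin_mem _ h _

lemma topIdxF_anti {f : Fin n → Fin n} {m : ℕ} (h : (topsF f).card = m) {i j : Fin m}
    (hij : i < j) : topIdxF f h j < topIdxF f h i := by
  apply ((topsF f).orderEmbOfFin h).strictMono
  exact Fin.rev_lt_rev.2 hij

lemma topIdxF_inj {f : Fin n → Fin n} {m : ℕ} (h : (topsF f).card = m) {i j : Fin m}
    (hij : topIdxF f h i = topIdxF f h j) : i = j := by
  rcases lt_trichotomy i j with hc | hc | hc
  · exact absurd hij.symm (ne_of_lt (topIdxF_anti h hc))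
  · exact hc
  · exact absurd hij (ne_of_lt (topIdxF_anti h hc))

lemma topIdxF_surj {f : Fin n → Fin n} {m : ℕ} (h : (topsF f).card = m) {t : Fin n}
    (ht : t ∈ topsF f) : ∃ j, topIdxF f h j = t := by
  have : t ∈ Set.range ((topsF f).orderEmbOfFin h) := by
    rw [Finset.range_orderEmbOfFin]
    exact_mod_cast ht
  obtain ⟨i, hi⟩ := this
  exact ⟨i.rev, by rw [topIdxF, Fin.rev_rev, hi]⟩

def SF (f : Fin n → Fin n) {m : ℕ} (h : (topsF f).card = m) (j : Fin m) : Finset (Fin n) :=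
  Finset.univ.filter (fun w => rootf f w = rootf f (topIdxF f h j))

def yF (f : Fin n → Fin n) {m : ℕ} (h : (topsF f).card = m) (j : Fin m) : Fin n :=
  f (topIdxF f h j)

lemma mem_SF {f : Fin n → Fin n} {m : ℕ} {h : (topsF f).card = m} {j : Fin m} {w : Fin n} :
    w ∈ SF f h j ↔ rootf f w = rootf f (topIdxF f h j) := by
  simp [SF]

lemma SF_nonempty (f : Fin n → Fin n) {m : ℕ} (h : (topsF f).card = m) (j : Fin m) :
    (SF f h j).Nonempty :=
  ⟨topIdxF f h j, mem_SF.2 rfl⟩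

lemma SF_max' (f : Fin n → Fin n) {m : ℕ} (h : (topsF f).card = m) (j : Fin m) :
    (SF f h j).max' (SF_nonempty f h j) = topIdxF f h j := by
  apply le_antisymm
  · have hm := Finset.max'_mem (SF f h j) (SF_nonempty f h j)
    exact mem_topsF.1 (topIdxF_mem h j) _ (mem_SF.1 hm)
  · exact Finset.le_max' _ _ (mem_SF.2 rfl)

lemma SF_max (f : Fin n → Fin n) {m : ℕ} (h : (topsF f).card = m) (j : Fin m) :
    (SF f h j).max = (topIdxF f h j : WithBot (Fin n)) := by
  rw [← Finset.coe_max' (SF_nonempty f h j), SF_max']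

lemma SF_disjoint (f : Fin n → Fin n) {m : ℕ} (h : (topsF f).card = m) {i j : Fin m}
    (hij : i ≠ j) : Disjoint (SF f h i) (SF f h j) := by
  rw [Finset.disjoint_left]
  intro a hai haj
  apply hij
  apply topIdxF_inj h
  apply top_inj (topIdxF_mem h i) (topIdxF_mem h j)
  rw [← mem_SF.1 hai, ← mem_SF.1 haj]

lemma SF_cover (f : Fin n → Fin n) {m : ℕ} (h : (topsF f).card = m) (a : Fin n) :
    ∃ j, a ∈ SF f h j := by
  obtain ⟨t, ht, hrt⟩ := exists_top f a
  obtain ⟨j, hj⟩ := topIdxF_surj h ht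
  exact ⟨j, mem_SF.2 (by rw [hj]; exact hrt.symm)⟩

lemma SF_maxlt (f : Fin n → Fin n) {m : ℕ} (h : (topsF f).card = m) {i j : Fin m}
    (hij : i < j) : (SF f h j).max < (SF f h i).max := by
  rw [SF_max, SF_max]
  exact_mod_cast topIdxF_anti h hij

lemma SF_cond5 (f : Fin n → Fin n) {m : ℕ} (h : (topsF f).card = m) {i j : Fin m}
    (hij : i < j) :
    ((SF f h i).filter (fun ℓ : Fin n => (SF f h j).max < (ℓ : WithBot (Fin n)))).min
      ≠ ((yF f h j : Fin n) : WithBot (Fin n)) := by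
  intro hcon
  set v := yF f h j with hv
  have hvmem := Finset.mem_of_min hcon
  rw [Finset.mem_filter, SF_max] at hvmem
  obtain ⟨hvSi, hvgt⟩ := hvmem
  have htjv : topIdxF f h j < v := by exact_mod_cast hvgt
  have hfv : f (topIdxF f h j) = v := rfl
  have hvns : ¬ isStart f v := by
    intro hs
    exact absurd htjv (not_lt.2 (hs _ hfv))
  have hpre : topIdxF f h j ∈ preb f v := by
    simp [preb, htjv, hfv]
  have h1 : topIdxF f h j ≤ gfun f v := le_gfun hpre
  have hne : gfun f v ≠ topIdxF f h j := by
    intro he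
    have : rootf f (topIdxF f h j) = rootf f (topIdxF f h i) := by
      rw [← he, rootf_gfun, mem_SF.1 hvSi]
    have := top_inj (topIdxF_mem h j) (topIdxF_mem h i) this
    exact absurd (topIdxF_inj h this) (ne_of_gt hij)
  have h2 : topIdxF f h j < gfun f v := lt_of_le_of_ne h1 (Ne.symm hne)
  have hgm : gfun f v ∈ (SF f h i).filter
      (fun ℓ : Fin n => (SF f h j).max < (ℓ : WithBot (Fin n))) := by
    rw [Finset.mem_filter, SF_max]
    constructor
    · rw [mem_SF, rootf_gfun]
      exact mem_SF.1 hvSi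
    · exact_mod_cast h2
  have hle := Finset.min_le hgm
  rw [hcon] at hle
  have hle' : v ≤ gfun f v := WithTop.coe_le_coe.1 hle
  exact absurd (lt_of_le_of_lt hle' (gfun_lt hvns)) (lt_irrefl _)


def Phi {m : ℕ} (S : Fin m → Finset (Fin n)) (y : Fin m → Fin n) : Fin n → Fin n :=
  fun a =>
    match Fin.find? (fun j => decide (a ∈ S j)) with
    | some j => ((S j).filter (fun b => a < b)).min.untopD (y j)
    | none => a

lemma mem_unique {m : ℕ} {S : Fin m → Finset (Fin n)}
    (hdisj : ∀ i j, i ≠ j → Disjoint (S i) (S j)) {a : Fin n} {i j : Fin m}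
    (hai : a ∈ S i) (haj : a ∈ S j) : i = j := by
  by_contra hc
  exact Finset.disjoint_left.1 (hdisj i j hc) hai haj

lemma find_eq_some {m : ℕ} {S : Fin m → Finset (Fin n)}
    (hdisj : ∀ i j, i ≠ j → Disjoint (S i) (S j)) {a : Fin n} {j : Fin m} (ha : a ∈ S j) :
    Fin.find? (fun j => decide (a ∈ S j)) = some j := by
  rw [← Option.mem_def, Fin.mem_find?_iff]
  refine ⟨by simpa using ha, fun j' hj' hp => ?_⟩
  have : a ∈ S j' := by simpa using hp
  exact absurd (mem_unique hdisj ha this) (ne_of_gt hj')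

lemma Phi_apply {m : ℕ} {S : Fin m → Finset (Fin n)} {y : Fin m → Fin n}
    (hdisj : ∀ i j, i ≠ j → Disjoint (S i) (S j)) {a : Fin n} {j : Fin m} (ha : a ∈ S j) :
    Phi S y a = ((S j).filter (fun b => a < b)).min.untopD (y j) := by
  rw [Phi, find_eq_some hdisj ha]

theorem Phi_Psi (f : Fin n → Fin n) {m : ℕ} (h : (topsF f).card = m) :
    Phi (SF f h) (yF f h) = f := by
  funext a
  obtain ⟨j, haj⟩ := SF_cover f h a
  rw [Phi_apply (fun i j hij => SF_disjoint f h hij) haj]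
  by_cases htop : a ∈ topsF f
  · have hempty : (SF f h j).filter (fun b => a < b) = ∅ := by
      rw [Finset.eq_empty_iff_forall_notMem]
      intro b hb
      rw [Finset.mem_filter] at hb
      have : b ≤ a := mem_topsF.1 htop b (by rw [mem_SF.1 hb.1, ← mem_SF.1 haj])
      exact absurd hb.2 (not_lt.2 this)
    rw [hempty]
    have hta : topIdxF f h j = a :=
      top_inj (topIdxF_mem h j) htop (mem_SF.1 haj).symm
    show yF f h j = f a
    rw [yF, hta]
  · have hex : ∃ w, rootf f w = rootf f a ∧ a < w := by
      by_contra hc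
      push_neg at hc
      exact htop (mem_topsF.2 fun w hw => hc w hw)
    obtain ⟨w, hw, haw⟩ := hex
    have hne : ((SF f h j).filter (fun b => a < b)).Nonempty := by
      refine ⟨w, ?_⟩
      rw [Finset.mem_filter]
      exact ⟨mem_SF.2 (by rw [hw, mem_SF.1 haj]), haw⟩
    set v := ((SF f h j).filter (fun b => a < b)).min' hne with hv
    have hvmem := Finset.min'_mem _ hne
    rw [Finset.mem_filter] at hvmem
    have hmin : ((SF f h j).filter (fun b => a < b)).min = (v : WithTop (Fin n)) := by
      rw [← Finset.coe_min' hne]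
    rw [hmin]
    show v = f a
    symm
    apply f_eq_next (f := f) (u := a) (v := v)
    · rw [mem_SF.1 hvmem.1, ← mem_SF.1 haj]
    · exact hvmem.2
    · intro w' hw' haw'
      apply Finset.min'_le
      rw [Finset.mem_filter]
      exact ⟨mem_SF.2 (by rw [hw', mem_SF.1 haj]), haw'⟩


section PartIII

variable {m : ℕ} {S : Fin m → Finset (Fin n)} {y : Fin m → Fin n}

/-- max of block -/
noncomputable def Mb (h1 : ∀ j, (S j).Nonempty) (j : Fin m) : Fin n := (S j).max' (h1 j)
/-- min of block -/
noncomputable def mb (h1 : ∀ j, (S j).Nonempty) (j : Fin m) : Fin n := (S j).min' (h1 j)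

lemma Mb_mem (h1 : ∀ j, (S j).Nonempty) (j : Fin m) : Mb h1 j ∈ S j :=
  Finset.max'_mem _ _

lemma mb_mem (h1 : ∀ j, (S j).Nonempty) (j : Fin m) : mb h1 j ∈ S j :=
  Finset.min'_mem _ _

lemma le_Mb (h1 : ∀ j, (S j).Nonempty) {a : Fin n} {j : Fin m} (ha : a ∈ S j) :
    a ≤ Mb h1 j := Finset.le_max' _ _ ha

lemma mb_le (h1 : ∀ j, (S j).Nonempty) {a : Fin n} {j : Fin m} (ha : a ∈ S j) :
    mb h1 j ≤ a := Finset.min'_le _ _ ha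

lemma coe_Mb (h1 : ∀ j, (S j).Nonempty) (j : Fin m) :
    (S j).max = (Mb h1 j : WithBot (Fin n)) := (Finset.coe_max' (h1 j)).symm

lemma Mb_anti (h1 : ∀ j, (S j).Nonempty) (h4 : ∀ i j, i < j → (S j).max < (S i).max)
    {i j : Fin m} (hij : i < j) : Mb h1 j < Mb h1 i := by
  have := h4 i j hij
  rw [coe_Mb h1, coe_Mb h1] at this
  exact_mod_cast this

lemma lt_of_Mb_lt (h1 : ∀ j, (S j).Nonempty) (h4 : ∀ i j, i < j → (S j).max < (S i).max)
    {i j : Fin m} (hij : i ≠ j) (hM : Mb h1 i < Mb h1 j) : j < i := by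
  rcases lt_trichotomy i j with hc | hc | hc
  · exact absurd hM (not_lt.2 (Mb_anti h1 h4 hc).le)
  · exact absurd hc hij
  · exact hc

lemma min'_inj (h1 : ∀ j, (S j).Nonempty) (hdisj : ∀ i j, i ≠ j → Disjoint (S i) (S j))
    {i j : Fin m} (he : mb h1 i = mb h1 j) : i = j := by
  apply mem_unique hdisj (a := mb h1 i) (Finset.min'_mem _ _)
  rw [he]; exact Finset.min'_mem _ _

lemma Phi_max (h1 : ∀ j, (S j).Nonempty) (hdisj : ∀ i j, i ≠ j → Disjoint (S i) (S j))
    (j : Fin m) : Phi S y (Mb h1 j) = y j := by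
  simp only [Mb]
  rw [Phi_apply hdisj (Finset.max'_mem _ (h1 j))]
  have hempty : (S j).filter (fun b => (S j).max' (h1 j) < b) = ∅ := by
    rw [Finset.eq_empty_iff_forall_notMem]
    intro b hb
    rw [Finset.mem_filter] at hb
    exact absurd hb.2 (not_lt.2 (Finset.le_max' _ _ hb.1))
  rw [hempty, Finset.min_empty, WithTop.untopD_top]

lemma Phi_nonmax (h1 : ∀ j, (S j).Nonempty) (hdisj : ∀ i j, i ≠ j → Disjoint (S i) (S j))
    {a : Fin n} {j : Fin m} (haj : a ∈ S j) (hne : a ≠ Mb h1 j) :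
    Phi S y a ∈ S j ∧ a < Phi S y a ∧ ∀ b ∈ S j, a < b → Phi S y a ≤ b := by
  have haM : a < Mb h1 j := lt_of_le_of_ne (Finset.le_max' _ _ haj) hne
  have hfne : ((S j).filter (fun b => a < b)).Nonempty :=
    ⟨Mb h1 j, Finset.mem_filter.2 ⟨Finset.max'_mem _ (h1 j), haM⟩⟩
  have hPhi : Phi S y a = ((S j).filter (fun b => a < b)).min' hfne := by
    rw [Phi_apply hdisj haj, ← Finset.coe_min' hfne, WithTop.untopD_coe]
  have hvmem := Finset.min'_mem _ hfne
  rw [Finset.mem_filter] at hvmem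
  refine ⟨by rw [hPhi]; exact hvmem.1, by rw [hPhi]; exact hvmem.2, ?_⟩
  intro b hb hab
  rw [hPhi]
  exact Finset.min'_le _ _ (Finset.mem_filter.2 ⟨hb, hab⟩)

lemma start_of_min (h1 : ∀ j, (S j).Nonempty) (hdisj : ∀ i j, i ≠ j → Disjoint (S i) (S j))
    (hcov : ∀ a, ∃ j, a ∈ S j) (h4 : ∀ i j, i < j → (S j).max < (S i).max)
    (h5 : ∀ j i, i < j → ((S i).filter
      (fun ℓ : Fin n => (S j).max < (ℓ : WithBot (Fin n)))).min ≠ ((y j : Fin n) : WithBot (Fin n)))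
    (j : Fin m) : isStart (Phi S y) (mb h1 j) := by
  intro a hfa
  by_contra hc
  push_neg at hc
  obtain ⟨i, hai⟩ := hcov a
  by_cases haM : a = Mb h1 i
  · -- a is the max of its block, y i = mb h1 j
    have hyi : y i = mb h1 j := by rw [← hfa, haM, Phi_max h1 hdisj]
    have hine : i ≠ j := by
      intro he
      rw [he] at haM
      have : mb h1 j ≤ a := by rw [haM]; exact Finset.min'_le _ _ (Finset.max'_mem _ (h1 j))
      exact absurd hc (not_lt.2 this)
    have hMlt : Mb h1 i < Mb h1 j := by
      calc Mb h1 i = a := haM.symm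
        _ < mb h1 j := hc
        _ ≤ Mb h1 j := Finset.min'_le _ _ (Finset.max'_mem _ (h1 j))
    have hji : j < i := lt_of_Mb_lt h1 h4 hine hMlt
    apply h5 i j hji
    have hSi_max : (S i).max = (a : WithBot (Fin n)) := by rw [coe_Mb h1, haM]
    have hfilter : (S j).filter (fun ℓ : Fin n => (S i).max < (ℓ : WithBot (Fin n))) = S j := by
      apply Finset.filter_true_of_mem
      intro ℓ hℓ
      rw [hSi_max]
      have : a < ℓ := lt_of_lt_of_le hc (Finset.min'_le _ _ hℓ)
      exact_mod_cast this
    rw [hfilter, hyi, ← Finset.coe_min' (h1 j)]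
    rfl
  · -- a not max: Phi a lands in S i and i = j, contradiction with minimality
    obtain ⟨hv1, hv2, _⟩ := Phi_nonmax (y := y) h1 hdisj hai haM
    rw [hfa] at hv1
    have hij : i = j := mem_unique hdisj hv1 (Finset.min'_mem _ (h1 j))
    rw [hij] at hai
    have : mb h1 j ≤ a := Finset.min'_le _ _ hai
    exact absurd hc (not_lt.2 this)


lemma gfun_Phi (h1 : ∀ j, (S j).Nonempty) (hdisj : ∀ i j, i ≠ j → Disjoint (S i) (S j))
    (hcov : ∀ a, ∃ j, a ∈ S j) (h4 : ∀ i j, i < j → (S j).max < (S i).max)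
    (h5 : ∀ j i, i < j → ((S i).filter
      (fun ℓ : Fin n => (S j).max < (ℓ : WithBot (Fin n)))).min ≠ ((y j : Fin n) : WithBot (Fin n)))
    {v : Fin n} {j : Fin m} (hvj : v ∈ S j) (hvm : v ≠ mb h1 j) :
    ¬ isStart (Phi S y) v ∧ gfun (Phi S y) v ∈ S j ∧ gfun (Phi S y) v < v := by
  have hmv : mb h1 j < v := lt_of_le_of_ne (Finset.min'_le _ _ hvj) (Ne.symm hvm)
  have hPne : ((S j).filter (fun x => x < v)).Nonempty :=
    ⟨mb h1 j, Finset.mem_filter.2 ⟨Finset.min'_mem _ (h1 j), hmv⟩⟩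
  obtain ⟨u, humem1, hub0⟩ : ∃ u, u ∈ (S j).filter (fun x => x < v) ∧
      ∀ b ∈ (S j).filter (fun x => x < v), b ≤ u :=
    ⟨_, Finset.max'_mem _ hPne, fun b hb => Finset.le_max' _ b hb⟩
  have humem : u ∈ S j ∧ u < v := by
    rw [Finset.mem_filter] at humem1; exact humem1
  have hub : ∀ b ∈ S j, b < v → b ≤ u :=
    fun b hb hbv => hub0 b (Finset.mem_filter.2 ⟨hb, hbv⟩)
  have huM : u ≠ Mb h1 j := by
    intro he
    have : v ≤ u := by rw [he]; exact le_Mb h1 hvj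
    exact absurd humem.2 (not_lt.2 this)
  obtain ⟨hP1, hP2, hP3⟩ := Phi_nonmax (y := y) h1 hdisj humem.1 huM
  have hPhiu : Phi S y u = v := by
    have hle : Phi S y u ≤ v := hP3 v hvj humem.2
    rcases lt_or_eq_of_le hle with hlt | he
    · exact absurd hP2 (not_lt.2 (hub _ hP1 hlt))
    · exact he
  have hns : ¬ isStart (Phi S y) v := by
    intro hs
    exact absurd humem.2 (not_lt.2 (hs u hPhiu))
  have hupre : u ∈ preb (Phi S y) v := by
    simp [preb, humem.2, hPhiu]
  have hbound : ∀ a ∈ preb (Phi S y) v, a ≤ u := by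
    intro a ha
    rw [preb, Finset.mem_filter] at ha
    obtain ⟨-, hav, hfa⟩ := ha
    obtain ⟨i, hai⟩ := hcov a
    by_cases haM : a = Mb h1 i
    · have hyi : y i = v := by rw [← hfa, haM, Phi_max h1 hdisj]
      have hine : i ≠ j := by
        intro he
        rw [he] at haM
        have : v ≤ a := by rw [haM]; exact Finset.le_max' _ _ hvj
        exact absurd hav (not_lt.2 this)
      have hMlt : Mb h1 i < Mb h1 j := by
        calc Mb h1 i = a := haM.symm
          _ < v := hav
          _ ≤ Mb h1 j := Finset.le_max' _ _ hvj
      have hji : j < i := lt_of_Mb_lt h1 h4 hine hMlt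
      by_contra hua
      push_neg at hua
      apply h5 i j hji
      have hSi_max : (S i).max = (a : WithBot (Fin n)) := by rw [coe_Mb h1, haM]
      rw [hyi, hSi_max]
      apply le_antisymm
      · apply Finset.min_le
        rw [Finset.mem_filter]
        exact ⟨hvj, by exact_mod_cast hav⟩
      · apply Finset.le_min
        intro b hb
        rw [Finset.mem_filter] at hb
        have hab : a < b := by exact_mod_cast hb.2
        have : v ≤ b := by
          by_contra hbv
          push_neg at hbv
          exact absurd hab (not_lt.2 ((hub b hb.1 hbv).trans hua.le))
        exact WithTop.coe_le_coe.2 this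
    · obtain ⟨hq1, hq2, hq3⟩ := Phi_nonmax (y := y) h1 hdisj hai haM
      rw [hfa] at hq1
      have hij : i = j := mem_unique hdisj hq1 hvj
      rw [hij] at hai
      exact hub a hai hav
  have hgu : gfun (Phi S y) v = u :=
    le_antisymm (hbound _ (gfun_mem_preb hns)) (le_gfun hupre)
  exact ⟨hns, by rw [hgu]; exact humem.1, by rw [hgu]; exact humem.2⟩

lemma rootf_Phi (h1 : ∀ j, (S j).Nonempty) (hdisj : ∀ i j, i ≠ j → Disjoint (S i) (S j))
    (hcov : ∀ a, ∃ j, a ∈ S j) (h4 : ∀ i j, i < j → (S j).max < (S i).max)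
    (h5 : ∀ j i, i < j → ((S i).filter
      (fun ℓ : Fin n => (S j).max < (ℓ : WithBot (Fin n)))).min ≠ ((y j : Fin n) : WithBot (Fin n)))
    {a : Fin n} {j : Fin m} (haj : a ∈ S j) : rootf (Phi S y) a = mb h1 j := by
  suffices H : ∀ (N : ℕ) (a : Fin n), (a : ℕ) < N → ∀ j : Fin m, a ∈ S j →
      rootf (Phi S y) a = mb h1 j from H ((a : ℕ) + 1) a (Nat.lt_succ_self _) j haj
  intro N
  induction N with
  | zero => intro a ha; exact absurd ha (Nat.not_lt_zero _)
  | succ N ih =>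
    intro a haN j haj
    by_cases hmin : a = mb h1 j
    · rw [hmin]
      exact rootf_of_start (start_of_min h1 hdisj hcov h4 h5 j)
    · obtain ⟨hns, hg1, hg2⟩ := gfun_Phi h1 hdisj hcov h4 h5 haj hmin
      rw [← rootf_gfun (f := Phi S y) a]
      exact ih (gfun (Phi S y) a) (by have : ((gfun (Phi S y) a : Fin n) : ℕ) < (a : ℕ) := hg2; omega) j hg1

lemma starts_Phi (h1 : ∀ j, (S j).Nonempty) (hdisj : ∀ i j, i ≠ j → Disjoint (S i) (S j))
    (hcov : ∀ a, ∃ j, a ∈ S j) (h4 : ∀ i j, i < j → (S j).max < (S i).max)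
    (h5 : ∀ j i, i < j → ((S i).filter
      (fun ℓ : Fin n => (S j).max < (ℓ : WithBot (Fin n)))).min ≠ ((y j : Fin n) : WithBot (Fin n))) :
    Finset.univ.filter (fun v : Fin n => isStart (Phi S y) v)
      = Finset.image (fun j => mb h1 j) Finset.univ := by
  ext v
  simp only [Finset.mem_filter, Finset.mem_univ, true_and, Finset.mem_image]
  constructor
  · intro hv
    obtain ⟨j, hvj⟩ := hcov v
    refine ⟨j, ?_⟩
    by_contra hne
    exact (gfun_Phi h1 hdisj hcov h4 h5 hvj (fun he => hne he.symm)).1 hv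
  · rintro ⟨j, rfl⟩
    exact start_of_min h1 hdisj hcov h4 h5 j

lemma numRuns_Phi (h1 : ∀ j, (S j).Nonempty) (hdisj : ∀ i j, i ≠ j → Disjoint (S i) (S j))
    (hcov : ∀ a, ∃ j, a ∈ S j) (h4 : ∀ i j, i < j → (S j).max < (S i).max)
    (h5 : ∀ j i, i < j → ((S i).filter
      (fun ℓ : Fin n => (S j).max < (ℓ : WithBot (Fin n)))).min ≠ ((y j : Fin n) : WithBot (Fin n))) :
    numRuns (Phi S y) = m := by
  have h0 : numRuns (Phi S y)
      = (Finset.univ.filter (fun v : Fin n => isStart (Phi S y) v)).card := rfl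
  rw [h0, starts_Phi h1 hdisj hcov h4 h5,
    Finset.card_image_of_injective _ (fun i j he => min'_inj h1 hdisj he),
    Finset.card_univ, Fintype.card_fin]

lemma tops_Phi (h1 : ∀ j, (S j).Nonempty) (hdisj : ∀ i j, i ≠ j → Disjoint (S i) (S j))
    (hcov : ∀ a, ∃ j, a ∈ S j) (h4 : ∀ i j, i < j → (S j).max < (S i).max)
    (h5 : ∀ j i, i < j → ((S i).filter
      (fun ℓ : Fin n => (S j).max < (ℓ : WithBot (Fin n)))).min ≠ ((y j : Fin n) : WithBot (Fin n))) :
    topsF (Phi S y) = Finset.image (fun j => Mb h1 j) Finset.univ := by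
  ext v
  rw [mem_topsF, Finset.mem_image]
  constructor
  · intro hv
    obtain ⟨j, hvj⟩ := hcov v
    refine ⟨j, Finset.mem_univ _, ?_⟩
    have h2 : Mb h1 j ≤ v := by
      apply hv
      rw [rootf_Phi h1 hdisj hcov h4 h5 (Mb_mem h1 j),
        rootf_Phi h1 hdisj hcov h4 h5 hvj]
    exact le_antisymm h2 (le_Mb h1 hvj)
  · rintro ⟨j, -, rfl⟩
    intro w hw
    obtain ⟨jw, hwj⟩ := hcov w
    rw [rootf_Phi h1 hdisj hcov h4 h5 hwj,
      rootf_Phi h1 hdisj hcov h4 h5 (Mb_mem h1 j)] at hw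
    have : jw = j := min'_inj h1 hdisj hw
    rw [this] at hwj
    exact le_Mb h1 hwj

lemma card_tops_Phi (h1 : ∀ j, (S j).Nonempty) (hdisj : ∀ i j, i ≠ j → Disjoint (S i) (S j))
    (hcov : ∀ a, ∃ j, a ∈ S j) (h4 : ∀ i j, i < j → (S j).max < (S i).max)
    (h5 : ∀ j i, i < j → ((S i).filter
      (fun ℓ : Fin n => (S j).max < (ℓ : WithBot (Fin n)))).min ≠ ((y j : Fin n) : WithBot (Fin n))) :
    (topsF (Phi S y)).card = m := by
  rw [card_topsF, numRuns_Phi h1 hdisj hcov h4 h5]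

lemma topIdx_Phi (h1 : ∀ j, (S j).Nonempty) (hdisj : ∀ i j, i ≠ j → Disjoint (S i) (S j))
    (hcov : ∀ a, ∃ j, a ∈ S j) (h4 : ∀ i j, i < j → (S j).max < (S i).max)
    (h5 : ∀ j i, i < j → ((S i).filter
      (fun ℓ : Fin n => (S j).max < (ℓ : WithBot (Fin n)))).min ≠ ((y j : Fin n) : WithBot (Fin n)))
    (h' : (topsF (Phi S y)).card = m) (j : Fin m) :
    topIdxF (Phi S y) h' j = Mb h1 j := by
  have hG : StrictMono (fun j : Fin m => Mb h1 j.rev) := by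
    intro i j hij
    exact Mb_anti h1 h4 (Fin.rev_lt_rev.2 hij)
  have hmem : ∀ x : Fin m, Mb h1 x.rev ∈ topsF (Phi S y) := by
    intro x
    rw [tops_Phi h1 hdisj hcov h4 h5, Finset.mem_image]
    exact ⟨x.rev, Finset.mem_univ _, rfl⟩
  have huniq := Finset.orderEmbOfFin_unique h' hmem hG
  have : topIdxF (Phi S y) h' j = (topsF (Phi S y)).orderEmbOfFin h' j.rev := rfl
  rw [this, ← huniq]
  simp [Fin.rev_rev]

lemma SF_Phi (h1 : ∀ j, (S j).Nonempty) (hdisj : ∀ i j, i ≠ j → Disjoint (S i) (S j))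
    (hcov : ∀ a, ∃ j, a ∈ S j) (h4 : ∀ i j, i < j → (S j).max < (S i).max)
    (h5 : ∀ j i, i < j → ((S i).filter
      (fun ℓ : Fin n => (S j).max < (ℓ : WithBot (Fin n)))).min ≠ ((y j : Fin n) : WithBot (Fin n)))
    (h' : (topsF (Phi S y)).card = m) (j : Fin m) :
    SF (Phi S y) h' j = S j := by
  ext w
  rw [mem_SF, topIdx_Phi h1 hdisj hcov h4 h5 h' j,
    rootf_Phi h1 hdisj hcov h4 h5 (Mb_mem h1 j)]
  constructor
  · intro hw
    obtain ⟨jw, hwj⟩ := hcov w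
    rw [rootf_Phi h1 hdisj hcov h4 h5 hwj] at hw
    have : jw = j := min'_inj h1 hdisj hw
    rw [← this]
    exact hwj
  · intro hw
    exact rootf_Phi h1 hdisj hcov h4 h5 hw

lemma yF_Phi (h1 : ∀ j, (S j).Nonempty) (hdisj : ∀ i j, i ≠ j → Disjoint (S i) (S j))
    (hcov : ∀ a, ∃ j, a ∈ S j) (h4 : ∀ i j, i < j → (S j).max < (S i).max)
    (h5 : ∀ j i, i < j → ((S i).filter
      (fun ℓ : Fin n => (S j).max < (ℓ : WithBot (Fin n)))).min ≠ ((y j : Fin n) : WithBot (Fin n)))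
    (h' : (topsF (Phi S y)).card = m) (j : Fin m) :
    yF (Phi S y) h' j = y j := by
  rw [yF, topIdx_Phi h1 hdisj hcov h4 h5 h' j, Phi_max h1 hdisj]

end PartIII

noncomputable def theEquiv (n m : ℕ) :
    {f : Fin n → Fin n // numRuns f = m} ≃
      {p : (Fin m → Finset (Fin n)) × (Fin m → Fin n) //
        (∀ j, (p.1 j).Nonempty) ∧
        (∀ i j, i ≠ j → Disjoint (p.1 i) (p.1 j)) ∧
        (∀ a : Fin n, ∃ j, a ∈ p.1 j) ∧
        (∀ i j, i < j → (p.1 j).max < (p.1 i).max) ∧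
        (∀ j i, i < j →
          ((p.1 i).filter (fun ℓ : Fin n => (p.1 j).max < (ℓ : WithBot (Fin n)))).min
            ≠ ((p.2 j : Fin n) : WithBot (Fin n)))} where
  toFun fp :=
    ⟨(SF fp.1 ((card_topsF fp.1).trans fp.2), yF fp.1 ((card_topsF fp.1).trans fp.2)),
      SF_nonempty fp.1 _,
      fun i j hij => SF_disjoint fp.1 _ hij,
      SF_cover fp.1 _,
      fun i j hij => SF_maxlt fp.1 _ hij,
      fun j i hij => SF_cond5 fp.1 _ hij⟩
  invFun p := ⟨Phi p.1.1 p.1.2,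
      numRuns_Phi p.2.1 p.2.2.1 p.2.2.2.1 p.2.2.2.2.1 p.2.2.2.2.2⟩
  left_inv fp := Subtype.ext (Phi_Psi fp.1 _)
  right_inv p := by
    obtain ⟨⟨S, y⟩, h1, h2, h3, h4, h5⟩ := p
    apply Subtype.ext
    dsimp only
    refine Prod.ext ?_ ?_
    · funext j; exact SF_Phi h1 h2 h3 h4 h5 _ j
    · funext j; exact yF_Phi h1 h2 h3 h4 h5 _ j

end RunProof

/-- The number of `n`-mappings with exactly `m` ascending runs equals the number
of pairs `(S, x)`, where `S = (S_1, …, S_m)` is a set partition of `Fin n` into `m`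
nonempty blocks ordered decreasingly by their maxima, and `x = (n_1, …, n_m)` is a
sequence of elements of `Fin n` such that for each `j`, `n_j` avoids, for every
`i < j`, the minimum of `{ℓ ∈ S_i : ℓ > max (S_j)}`. -/
theorem mappingRunCount_eq_card_pairs (n m : ℕ) (hn : 1 ≤ n) (hm : 1 ≤ m) (hmn : m ≤ n) :
    mappingRunCount n m =
      Nat.card {p : (Fin m → Finset (Fin n)) × (Fin m → Fin n) //
        (∀ j, (p.1 j).Nonempty) ∧
        (∀ i j, i ≠ j → Disjoint (p.1 i) (p.1 j)) ∧
        (∀ a : Fin n, ∃ j, a ∈ p.1 j) ∧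
        (∀ i j, i < j → (p.1 j).max < (p.1 i).max) ∧
        (∀ j i, i < j →
          ((p.1 i).filter (fun ℓ : Fin n => (p.1 j).max < (ℓ : WithBot (Fin n)))).min
            ≠ ((p.2 j : Fin n) : WithBot (Fin n)))} :=
  Nat.card_congr (RunProof.theEquiv n m)
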